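/- Let G be an infinite finitely generated group, μ a probability measure on G whose support generates G as a semigroup, such that the μ-random walk is transient. Then there is no positive μ-harmonic function h on G with h(x) ≤ 𝒢(o,x) for all x ∈ G, where 𝒢 is the Green's function and o the identity. -/

import Mathlib

open scoped Classical

/-- `n`-fold convolution power of a measure `μ` on a countable group. -/
noncomputable def convPow {G : Type*} [Group G] (μ : G → ℝ) : ℕ → G → ℝ
  | 0 => fun g => if g = 1 then 1 else 0
  | n + 1 => fun g => ∑' h : G, μ h * convPow μ n (h⁻¹ * g)

/-- Green's function `𝒢(x,y) = ∑_{n ≥ 0} μ^{*n}(x⁻¹ y)`. -/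
noncomputable def green {G : Type*} [Group G] (μ : G → ℝ) (x y : G) : ℝ :=
  ∑' n : ℕ, convPow μ n (x⁻¹ * y)

namespace Stmt4Aux

open ENNReal

variable {G : Type*} [Group G]

/-- convolution powers valued in `ℝ≥0∞`. -/
noncomputable def P (μ : G → ℝ) (n : ℕ) (x : G) : ℝ≥0∞ :=
  ENNReal.ofReal (convPow μ n x)

variable (μ : G → ℝ) (hμ0 : ∀ g, 0 ≤ μ g) (hμ1 : HasSum μ 1)

include hμ0 in
theorem convPow_nonneg : ∀ n x, 0 ≤ convPow μ n x
  | 0, x => by unfold convPow; positivity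
  | n + 1, x => by
      unfold convPow
      exact tsum_nonneg fun g => mul_nonneg (hμ0 g) (convPow_nonneg n _)

include hμ0 hμ1 in
theorem convPow_le_one : ∀ n x, convPow μ n x ≤ 1
  | 0, x => by unfold convPow; split <;> norm_num
  | n + 1, x => by
      have hs : Summable fun g => μ g * convPow μ n (g⁻¹ * x) :=
        Summable.of_nonneg_of_le
          (fun g => mul_nonneg (hμ0 g) (convPow_nonneg μ hμ0 n _))
          (fun g => mul_le_of_le_one_right (hμ0 g) (convPow_le_one n _))
          hμ1.summable
      calc convPow μ (n+1) x = ∑' g : G, μ g * convPow μ n (g⁻¹ * x) := rfl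
        _ ≤ ∑' g : G, μ g :=
            Summable.tsum_le_tsum (fun g => mul_le_of_le_one_right (hμ0 g) (convPow_le_one n _))
              hs hμ1.summable
        _ = 1 := hμ1.tsum_eq

include hμ0 hμ1 in
theorem convPow_def_summable (n : ℕ) (x : G) :
    Summable fun g => μ g * convPow μ n (g⁻¹ * x) :=
  Summable.of_nonneg_of_le
    (fun g => mul_nonneg (hμ0 g) (convPow_nonneg μ hμ0 n _))
    (fun g => mul_le_of_le_one_right (hμ0 g) (convPow_le_one μ hμ0 hμ1 n _))
    hμ1.summable

theorem P_zero (x : G) : P μ 0 x = if x = 1 then 1 else 0 := by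
  unfold P convPow
  split <;> simp

include hμ0 hμ1 in
theorem P_recur (n : ℕ) (x : G) :
    P μ (n + 1) x = ∑' g : G, ENNReal.ofReal (μ g) * P μ n (g⁻¹ * x) := by
  have h1 : convPow μ (n+1) x = ∑' g : G, μ g * convPow μ n (g⁻¹ * x) := rfl
  rw [P, h1, ENNReal.ofReal_tsum_of_nonneg
    (fun g => mul_nonneg (hμ0 g) (convPow_nonneg μ hμ0 n _))
    (convPow_def_summable μ hμ0 hμ1 n x)]
  exact tsum_congr fun g => ENNReal.ofReal_mul (hμ0 g)

include hμ0 hμ1 in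
theorem P_conv : ∀ (n : ℕ) (m : ℕ) (x : G),
    P μ (n + m) x = ∑' y : G, P μ n y * P μ m (y⁻¹ * x)
  | 0, m, x => by
      rw [zero_add]
      have h1 : ∑' y : G, P μ 0 y * P μ m (y⁻¹ * x) = P μ 0 1 * P μ m (1⁻¹ * x) :=
        tsum_eq_single 1 (fun y hy => by rw [P_zero, if_neg hy, zero_mul])
      rw [h1, P_zero, if_pos rfl, one_mul, inv_one, one_mul]
  | n + 1, m, x => by
      have hadd : n + 1 + m = (n + m) + 1 := by omega
      rw [hadd, P_recur μ hμ0 hμ1]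
      calc ∑' g : G, ENNReal.ofReal (μ g) * P μ (n + m) (g⁻¹ * x)
          = ∑' g : G, ∑' y : G,
              ENNReal.ofReal (μ g) * (P μ n y * P μ m (y⁻¹ * (g⁻¹ * x))) := by
            refine tsum_congr fun g => ?_
            rw [P_conv n m (g⁻¹ * x), ENNReal.tsum_mul_left]
        _ = ∑' g : G, ∑' z : G,
              ENNReal.ofReal (μ g) * (P μ n (g⁻¹ * z) * P μ m (z⁻¹ * x)) := by
            refine tsum_congr fun g => ?_
            refine Eq.trans ?_ ((Equiv.mulLeft g).tsum_eq
              (fun z => ENNReal.ofReal (μ g) * (P μ n (g⁻¹ * z) * P μ m (z⁻¹ * x))))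
            refine tsum_congr fun y => ?_
            simp [inv_mul_cancel_left, mul_inv_rev, mul_assoc]
        _ = ∑' z : G, ∑' g : G,
              ENNReal.ofReal (μ g) * (P μ n (g⁻¹ * z) * P μ m (z⁻¹ * x)) := ENNReal.tsum_comm
        _ = ∑' z : G, P μ (n + 1) z * P μ m (z⁻¹ * x) := by
            refine tsum_congr fun z => ?_
            rw [P_recur μ hμ0 hμ1, ← ENNReal.tsum_mul_right]
            exact tsum_congr fun g => (mul_assoc _ _ _).symm


/-- first passage probabilities, valued in `ℝ≥0∞`. -/
noncomputable def fp (μ : G → ℝ) : ℕ → G → ℝ≥0∞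
  | 0 => fun x => if x = 1 then 1 else 0
  | n + 1 => fun x =>
      if x = 1 then 0 else ∑' g : G, ENNReal.ofReal (μ g) * fp μ n (g⁻¹ * x)

theorem fp_zero (x : G) : fp μ 0 x = if x = 1 then 1 else 0 := rfl

theorem fp_succ (n : ℕ) (x : G) :
    fp μ (n + 1) x =
      if x = 1 then 0 else ∑' g : G, ENNReal.ofReal (μ g) * fp μ n (g⁻¹ * x) := rfl

include hμ0 hμ1 in
theorem fp_le_P : ∀ (n : ℕ) (x : G), fp μ n x ≤ P μ n x
  | 0, x => by rw [P_zero]; unfold fp; exact le_rfl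
  | n + 1, x => by
      unfold fp
      split
      · exact zero_le
      · rw [P_recur μ hμ0 hμ1]
        exact ENNReal.tsum_le_tsum fun g => mul_le_mul_right (fp_le_P n _) _

include hμ0 hμ1 in
theorem renewal : ∀ (n : ℕ) (x : G),
    P μ n x = ∑ k ∈ Finset.range (n + 1), fp μ k x * P μ (n - k) 1
  | 0, x => by
      rw [Finset.sum_range_one, P_zero]
      unfold fp
      rw [Nat.sub_zero, P_zero, if_pos rfl, mul_one]
  | n + 1, x => by
      by_cases hx : x = 1
      · subst hx
        rw [Finset.sum_eq_single_of_mem 0 (Finset.mem_range.2 (by omega))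
            (fun k _ hk => by
              obtain ⟨j, rfl⟩ := Nat.exists_eq_succ_of_ne_zero hk
              unfold fp
              rw [if_pos rfl, zero_mul])]
        unfold fp
        rw [Nat.sub_zero, if_pos rfl, one_mul]
      · calc P μ (n + 1) x = ∑' g : G, ENNReal.ofReal (μ g) * P μ n (g⁻¹ * x) :=
              P_recur μ hμ0 hμ1 n x
          _ = ∑' g : G, ∑ k ∈ Finset.range (n + 1),
                ENNReal.ofReal (μ g) * fp μ k (g⁻¹ * x) * P μ (n - k) 1 := by
              refine tsum_congr fun g => ?_
              rw [renewal n (g⁻¹ * x), Finset.mul_sum]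
              exact Finset.sum_congr rfl fun k _ => (mul_assoc _ _ _).symm
          _ = ∑ k ∈ Finset.range (n + 1),
                ∑' g : G, ENNReal.ofReal (μ g) * fp μ k (g⁻¹ * x) * P μ (n - k) 1 :=
              Summable.tsum_finsetSum fun k _ => ENNReal.summable
          _ = ∑ k ∈ Finset.range (n + 1), fp μ (k + 1) x * P μ (n - k) 1 := by
              refine Finset.sum_congr rfl fun k _ => ?_
              rw [ENNReal.tsum_mul_right]
              congr 1
              rw [fp_succ, if_neg hx]
          _ = ∑ k ∈ Finset.range (n + 2), fp μ k x * P μ (n + 1 - k) 1 := by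
              conv_rhs => rw [Finset.sum_range_succ']
              have h0 : fp μ 0 x * P μ (n + 1 - 0) 1 = 0 := by
                rw [fp_zero, if_neg hx, zero_mul]
              rw [h0, add_zero]
              exact (Finset.sum_congr rfl fun k _ => by rw [Nat.succ_sub_succ]).symm

/-- summing over the antidiagonal. -/
theorem dsum (a : ℕ → ℕ → ℝ≥0∞) :
    ∑' n : ℕ, ∑ k ∈ Finset.range (n + 1), a k (n - k) = ∑' k : ℕ, ∑' m : ℕ, a k m := by
  classical
  set f : ℕ × ℕ → ℝ≥0∞ := fun q => if q.2 ≤ q.1 then a q.2 (q.1 - q.2) else 0 with hf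
  have h1 : ∑' q : ℕ × ℕ, f q = ∑' n : ℕ, ∑ k ∈ Finset.range (n + 1), a k (n - k) := by
    rw [ENNReal.tsum_prod']
    refine tsum_congr fun n => ?_
    rw [tsum_eq_sum (s := Finset.range (n + 1))
      (fun k hk => if_neg (by simp only [Finset.mem_range] at hk; omega))]
    exact Finset.sum_congr rfl fun k hk =>
      if_pos (by simp only [Finset.mem_range] at hk; omega)
  have hinj : Function.Injective (fun p : ℕ × ℕ => (p.1 + p.2, p.1)) := by
    intro p q h
    simp only [Prod.mk.injEq] at h
    obtain ⟨h1, h2⟩ := h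
    exact Prod.ext h2 (by omega)
  have hsupp : Function.support f ⊆ Set.range (fun p : ℕ × ℕ => (p.1 + p.2, p.1)) := by
    intro q hq
    rw [Function.mem_support, hf] at hq
    by_cases h : q.2 ≤ q.1
    · exact ⟨(q.2, q.1 - q.2), by simp [Prod.ext_iff]; omega⟩
    · exact absurd (if_neg h) hq
  have h2 : ∑' p : ℕ × ℕ, f ((fun p : ℕ × ℕ => (p.1 + p.2, p.1)) p) = ∑' q : ℕ × ℕ, f q :=
    hinj.tsum_eq hsupp
  have h3 : ∀ p : ℕ × ℕ, f ((fun p : ℕ × ℕ => (p.1 + p.2, p.1)) p) = a p.1 p.2 := by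
    intro p
    simp only [hf]
    rw [if_pos (Nat.le_add_right _ _), Nat.add_sub_cancel_left]
  rw [← h1, ← h2]
  rw [tsum_congr h3, ENNReal.tsum_prod']


/-- ENNReal Green's function. -/
noncomputable def GreenE (μ : G → ℝ) (x : G) : ℝ≥0∞ := ∑' n : ℕ, P μ n x

/-- ENNReal total first-passage. -/
noncomputable def FpE (μ : G → ℝ) (x : G) : ℝ≥0∞ := ∑' k : ℕ, fp μ k x

include hμ0 hμ1 in
theorem green_renewal (x : G) : GreenE μ x = FpE μ x * GreenE μ 1 := by
  calc GreenE μ x = ∑' n : ℕ, ∑ k ∈ Finset.range (n + 1), fp μ k x * P μ (n - k) 1 :=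
        tsum_congr fun n => renewal μ hμ0 hμ1 n x
    _ = ∑' k : ℕ, ∑' m : ℕ, fp μ k x * P μ m 1 := dsum fun k m => fp μ k x * P μ m 1
    _ = ∑' k : ℕ, fp μ k x * GreenE μ 1 := tsum_congr fun k => ENNReal.tsum_mul_left
    _ = FpE μ x * GreenE μ 1 := ENNReal.tsum_mul_right

include hμ0 hμ1 in
theorem tail_est (n : ℕ) :
    ∑' y : G, P μ n y * FpE μ y⁻¹ ≤ ∑' k : ℕ, P μ (n + k) 1 := by
  calc ∑' y : G, P μ n y * FpE μ y⁻¹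
      = ∑' y : G, ∑' k : ℕ, P μ n y * fp μ k y⁻¹ :=
        tsum_congr fun y => ENNReal.tsum_mul_left.symm
    _ = ∑' k : ℕ, ∑' y : G, P μ n y * fp μ k y⁻¹ := ENNReal.tsum_comm
    _ ≤ ∑' k : ℕ, P μ (n + k) 1 := by
        refine ENNReal.tsum_le_tsum fun k => ?_
        calc ∑' y : G, P μ n y * fp μ k y⁻¹
            ≤ ∑' y : G, P μ n y * P μ k y⁻¹ :=
              ENNReal.tsum_le_tsum fun y => mul_le_mul_right (fp_le_P μ hμ0 hμ1 k _) _
          _ = P μ (n + k) 1 := by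
              rw [P_conv μ hμ0 hμ1 n k 1]
              exact tsum_congr fun y => by rw [mul_one]

section Harmonic

variable (h : G → ℝ) (hpos : ∀ x, 0 < h x)
  (hsum : ∀ x : G, Summable fun g => h (x * g) * μ g)
  (hharm : ∀ x : G, (∑' g : G, h (x * g) * μ g) = h x)

include hμ0 hpos hsum hharm in
theorem harmE (x : G) :
    ENNReal.ofReal (h x) = ∑' g : G, ENNReal.ofReal (h (x * g)) * ENNReal.ofReal (μ g) := by
  rw [← hharm x, ENNReal.ofReal_tsum_of_nonneg
    (fun g => mul_nonneg (hpos _).le (hμ0 g)) (hsum x)]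
  exact tsum_congr fun g => ENNReal.ofReal_mul (hpos _).le

include hμ0 hμ1 hpos hsum hharm in
theorem harm_iter : ∀ (n : ℕ) (x : G),
    ENNReal.ofReal (h x) = ∑' y : G, ENNReal.ofReal (h (x * y)) * P μ n y
  | 0, x => by
      refine Eq.trans ?_
        (tsum_eq_single 1 fun y hy => by rw [P_zero, if_neg hy, mul_zero]).symm
      rw [P_zero, if_pos rfl, mul_one, mul_one]
  | n + 1, x => by
      calc ENNReal.ofReal (h x)
          = ∑' g : G, ENNReal.ofReal (h (x * g)) * ENNReal.ofReal (μ g) :=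
            harmE μ hμ0 h hpos hsum hharm x
        _ = ∑' g : G, ∑' y : G,
              ENNReal.ofReal (h (x * (g * y))) * P μ n y * ENNReal.ofReal (μ g) := by
            refine tsum_congr fun g => ?_
            rw [harm_iter n (x * g), ← ENNReal.tsum_mul_right]
            exact tsum_congr fun y => by rw [mul_assoc x g y]
        _ = ∑' g : G, ∑' z : G,
              ENNReal.ofReal (h (x * z)) * P μ n (g⁻¹ * z) * ENNReal.ofReal (μ g) := by
            refine tsum_congr fun g => ?_
            refine Eq.trans ?_ ((Equiv.mulLeft g).tsum_eq
              (fun z => ENNReal.ofReal (h (x * z)) * P μ n (g⁻¹ * z) * ENNReal.ofReal (μ g)))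
            refine tsum_congr fun y => ?_
            simp [inv_mul_cancel_left]
        _ = ∑' z : G, ∑' g : G,
              ENNReal.ofReal (h (x * z)) * P μ n (g⁻¹ * z) * ENNReal.ofReal (μ g) :=
            ENNReal.tsum_comm
        _ = ∑' z : G, ENNReal.ofReal (h (x * z)) * P μ (n + 1) z := by
            refine tsum_congr fun z => ?_
            rw [P_recur μ hμ0 hμ1, ← ENNReal.tsum_mul_left]
            refine tsum_congr fun g => ?_
            ring

include hμ0 hμ1 hpos hsum hharm in
theorem super : ∀ (n : ℕ) (x y : G),
    (∑ k ∈ Finset.range (n + 1), fp μ k y) * ENNReal.ofReal (h (x * y)) ≤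
      ENNReal.ofReal (h x)
  | 0, x, y => by
      rw [Finset.sum_range_one, fp_zero]
      by_cases hy : y = 1
      · subst hy; rw [if_pos rfl, one_mul, mul_one]
      · rw [if_neg hy, zero_mul]; exact zero_le
  | n + 1, x, y => by
      by_cases hy : y = 1
      · subst hy
        have hsum1 : ∑ k ∈ Finset.range (n + 2), fp μ k (1 : G) = 1 := by
          rw [Finset.sum_eq_single_of_mem 0 (Finset.mem_range.2 (by omega))
            (fun k _ hk => by
              obtain ⟨j, rfl⟩ := Nat.exists_eq_succ_of_ne_zero hk
              rw [fp_succ, if_pos rfl])]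
          rw [fp_zero, if_pos rfl]
        rw [hsum1, one_mul, mul_one]
      · calc (∑ k ∈ Finset.range (n + 2), fp μ k y) * ENNReal.ofReal (h (x * y))
            = ∑ k ∈ Finset.range (n + 1), fp μ (k + 1) y * ENNReal.ofReal (h (x * y)) := by
              conv_lhs => rw [Finset.sum_range_succ']
              rw [fp_zero, if_neg hy, add_zero, Finset.sum_mul]
          _ = ∑ k ∈ Finset.range (n + 1), ∑' g : G,
                ENNReal.ofReal (μ g) *
                  ((fp μ k (g⁻¹ * y)) * ENNReal.ofReal (h (x * y))) := by
              refine Finset.sum_congr rfl fun k _ => ?_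
              rw [fp_succ, if_neg hy, ← ENNReal.tsum_mul_right]
              exact tsum_congr fun g => mul_assoc _ _ _
          _ = ∑' g : G, ∑ k ∈ Finset.range (n + 1),
                ENNReal.ofReal (μ g) *
                  ((fp μ k (g⁻¹ * y)) * ENNReal.ofReal (h (x * y))) :=
              (Summable.tsum_finsetSum fun k _ => ENNReal.summable).symm
          _ = ∑' g : G, ENNReal.ofReal (μ g) *
                ((∑ k ∈ Finset.range (n + 1), fp μ k (g⁻¹ * y)) * ENNReal.ofReal (h (x * y))) := by
              refine tsum_congr fun g => ?_
              rw [← Finset.mul_sum, Finset.sum_mul]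
          _ ≤ ∑' g : G, ENNReal.ofReal (μ g) * ENNReal.ofReal (h (x * g)) := by
              refine ENNReal.tsum_le_tsum fun g => mul_le_mul_right ?_ _
              have := super n (x * g) (g⁻¹ * y)
              rwa [mul_assoc, mul_inv_cancel_left] at this
          _ = ∑' g : G, ENNReal.ofReal (h (x * g)) * ENNReal.ofReal (μ g) :=
              tsum_congr fun g => mul_comm _ _
          _ = ENNReal.ofReal (h x) := (harmE μ hμ0 h hpos hsum hharm x).symm

include hμ0 hμ1 hpos hsum hharm in
theorem superF (x y : G) :
    FpE μ y * ENNReal.ofReal (h (x * y)) ≤ ENNReal.ofReal (h x) := by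
  have hFp : FpE μ y = ⨆ n : ℕ, ∑ k ∈ Finset.range (n + 1), fp μ k y :=
    ENNReal.tsum_eq_iSup_sum' _ fun t =>
      (t.exists_nat_subset_range).imp fun n hn =>
        hn.trans (Finset.range_subset_range.2 (Nat.le_succ n))
  rw [hFp, ENNReal.iSup_mul]
  exact iSup_le fun n => super μ hμ0 hμ1 h hpos hsum hharm n x y

end Harmonic

end Stmt4Aux

open Stmt4Aux in
theorem stmt4' {G : Type*} [Group G] [Countable G]
    (μ : G → ℝ) (hμ0 : ∀ g, 0 ≤ μ g) (hμ1 : HasSum μ 1)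
    (htransient : ∀ x y : G, Summable fun n : ℕ => convPow μ n (x⁻¹ * y)) :
    ¬ ∃ h : G → ℝ, (∀ x, 0 < h x) ∧
      (∀ x : G, Summable fun g => h (x * g) * μ g) ∧
      (∀ x : G, (∑' g, h (x * g) * μ g) = h x) ∧
      (∀ x : G, h x ≤ green μ 1 x) := by
  rintro ⟨h, hpos, hsum, hharm, hdom⟩
  classical
  -- Green's function transfer to ℝ≥0∞
  have hGreenE : ∀ y : G, GreenE μ y = ENNReal.ofReal (green μ 1 y) := by
    intro y
    rw [green, ENNReal.ofReal_tsum_of_nonneg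
      (fun n => convPow_nonneg μ hμ0 n _) (htransient 1 y)]
    exact tsum_congr fun n => by rw [P, inv_one, one_mul]
  have hHle : ∀ y : G, ENNReal.ofReal (h y) ≤ GreenE μ y := fun y => by
    rw [hGreenE y]; exact ENNReal.ofReal_le_ofReal (hdom y)
  set G1 : ℝ := green μ 1 1 with hG1def
  have hG1nonneg : 0 ≤ G1 := by
    rw [hG1def, green]
    exact tsum_nonneg fun n => convPow_nonneg μ hμ0 n _
  have h1pos : 0 < h 1 := hpos 1
  -- per-point bound
  have perY : ∀ y : G,
      ENNReal.ofReal (h y) * ENNReal.ofReal (h 1) ≤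
        FpE μ y⁻¹ * (GreenE μ 1 * GreenE μ 1) := by
    intro y
    have key : FpE μ y * ENNReal.ofReal (h 1) ≤ ENNReal.ofReal (h y⁻¹) := by
      have := superF μ hμ0 hμ1 h hpos hsum hharm y⁻¹ y
      rwa [inv_mul_cancel] at this
    calc ENNReal.ofReal (h y) * ENNReal.ofReal (h 1)
        ≤ GreenE μ y * ENNReal.ofReal (h 1) := mul_le_mul_left (hHle y) _
      _ = FpE μ y * ENNReal.ofReal (h 1) * GreenE μ 1 := by
          rw [green_renewal μ hμ0 hμ1 y]; ring
      _ ≤ ENNReal.ofReal (h y⁻¹) * GreenE μ 1 := mul_le_mul_left key _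
      _ ≤ GreenE μ y⁻¹ * GreenE μ 1 := mul_le_mul_left (hHle y⁻¹) _
      _ = FpE μ y⁻¹ * (GreenE μ 1 * GreenE μ 1) := by
          rw [green_renewal μ hμ0 hμ1 y⁻¹]; ring
  -- main inequality for every n
  have main : ∀ n : ℕ,
      ENNReal.ofReal (h 1) * ENNReal.ofReal (h 1) ≤
        (∑' k : ℕ, P μ (n + k) 1) * (GreenE μ 1 * GreenE μ 1) := by
    intro n
    calc ENNReal.ofReal (h 1) * ENNReal.ofReal (h 1)
        = (∑' y : G, ENNReal.ofReal (h (1 * y)) * P μ n y) * ENNReal.ofReal (h 1) := by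
          rw [← harm_iter μ hμ0 hμ1 h hpos hsum hharm n 1]
      _ = ∑' y : G, ENNReal.ofReal (h y) * ENNReal.ofReal (h 1) * P μ n y := by
          rw [← ENNReal.tsum_mul_right]
          exact tsum_congr fun y => by rw [one_mul]; ring
      _ ≤ ∑' y : G, FpE μ y⁻¹ * (GreenE μ 1 * GreenE μ 1) * P μ n y :=
          ENNReal.tsum_le_tsum fun y => mul_le_mul_left (perY y) _
      _ = (∑' y : G, P μ n y * FpE μ y⁻¹) * (GreenE μ 1 * GreenE μ 1) := by
          rw [← ENNReal.tsum_mul_right]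
          exact tsum_congr fun y => by ring
      _ ≤ (∑' k : ℕ, P μ (n + k) 1) * (GreenE μ 1 * GreenE μ 1) :=
          mul_le_mul_left (tail_est μ hμ0 hμ1 n) _
  -- transfer to ℝ
  have hg1 : Summable fun n : ℕ => convPow μ n (1 : G) := by
    have := htransient 1 1
    rwa [inv_one, one_mul] at this
  have hshift : ∀ n : ℕ, Summable fun k : ℕ => convPow μ (n + k) (1 : G) := by
    intro n
    exact hg1.comp_injective (add_right_injective n)
  have hTail : ∀ n : ℕ, (∑' k : ℕ, P μ (n + k) (1 : G)) =
      ENNReal.ofReal (∑' k : ℕ, convPow μ (n + k) (1 : G)) := by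
    intro n
    rw [ENNReal.ofReal_tsum_of_nonneg (fun k => convPow_nonneg μ hμ0 _ _) (hshift n)]
    exact tsum_congr fun k => rfl
  have main2 : ∀ n : ℕ,
      h 1 * h 1 ≤ (∑' k : ℕ, convPow μ (n + k) (1 : G)) * (G1 * G1) := by
    intro n
    have hmn := main n
    rw [hTail n, hGreenE 1] at hmn
    have hre : ENNReal.ofReal (h 1 * h 1) ≤
        ENNReal.ofReal ((∑' k : ℕ, convPow μ (n + k) (1 : G)) * (G1 * G1)) := by
      rw [ENNReal.ofReal_mul h1pos.le,
        ENNReal.ofReal_mul (tsum_nonneg fun k => convPow_nonneg μ hμ0 _ _),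
        ENNReal.ofReal_mul hG1nonneg]
      exact hmn
    have hrhs : 0 ≤ (∑' k : ℕ, convPow μ (n + k) (1 : G)) * (G1 * G1) :=
      mul_nonneg (tsum_nonneg fun k => convPow_nonneg μ hμ0 _ _)
        (mul_nonneg hG1nonneg hG1nonneg)
    exact (ENNReal.ofReal_le_ofReal_iff hrhs).1 hre
  -- tails go to zero
  have htt : Filter.Tendsto (fun n : ℕ => ∑' k : ℕ, convPow μ (k + n) (1 : G))
      Filter.atTop (nhds 0) := tendsto_sum_nat_add fun m => convPow μ m (1 : G)
  have hεpos : 0 < h 1 * h 1 / (G1 * G1 + 1) := by positivity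
  obtain ⟨N, hN⟩ := (htt.eventually_lt_const hεpos).exists
  set t : ℝ := ∑' k : ℕ, convPow μ (N + k) (1 : G) with htdef
  have hteq : (∑' k : ℕ, convPow μ (k + N) (1 : G)) = t :=
    tsum_congr fun k => by rw [add_comm]
  rw [hteq] at hN
  have ht0 : 0 ≤ t := tsum_nonneg fun k => convPow_nonneg μ hμ0 _ _
  have h2 : h 1 * h 1 ≤ t * (G1 * G1) := main2 N
  have h3 : t * (G1 * G1 + 1) < h 1 * h 1 := by
    rw [← lt_div_iff₀ (by positivity : (0:ℝ) < G1 * G1 + 1)]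
    exact hN
  nlinarith [mul_nonneg ht0 (mul_nonneg hG1nonneg hG1nonneg)]

/-- for a transient random walk on an infinite finitely generated group,
there is no positive μ-harmonic function dominated by `𝒢(o, ·)`. -/
theorem stmt4 {G : Type*} [Group G] [Countable G] [Infinite G] (hFG : Group.FG G)
    (μ : G → ℝ) (hμ0 : ∀ g, 0 ≤ μ g) (hμ1 : HasSum μ 1)
    (hgen : Subsemigroup.closure {g : G | 0 < μ g} = ⊤)
    (htransient : ∀ x y : G, Summable fun n : ℕ => convPow μ n (x⁻¹ * y)) :
    ¬ ∃ h : G → ℝ, (∀ x, 0 < h x) ∧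
      (∀ x : G, Summable fun g => h (x * g) * μ g) ∧
      (∀ x : G, (∑' g, h (x * g) * μ g) = h x) ∧
      (∀ x : G, h x ≤ green μ 1 x) := by
  exact stmt4' μ hμ0 hμ1 htransient
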